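/- For any two Laplacian matrices L and L̂ of connected graphs on n nodes, tr((L + L̂)^†) ≤ (1/4) tr(L^†) + (1/4) tr(L̂^†); equivalently tr(L̂^†) + tr(L^†) − 4 tr((L+L̂)^†) ≥ 0. -/

import Mathlib

open Matrix

/-- `B` is the Moore–Penrose pseudoinverse of `A`. -/
def IsMPInv {n : ℕ} (A B : Matrix (Fin n) (Fin n) ℝ) : Prop :=
  A * B * A = A ∧ B * A * B = B ∧ (A * B)ᵀ = A * B ∧ (B * A)ᵀ = B * A

namespace MPAux

variable {n : ℕ}

lemma dot_shift (A : Matrix (Fin n) (Fin n) ℝ) (x z : Fin n → ℝ) :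
    x ⬝ᵥ (A *ᵥ z) = (Aᵀ *ᵥ x) ⬝ᵥ z := by
  rw [dotProduct_mulVec, mulVec_transpose]

lemma mp_unique {A B C : Matrix (Fin n) (Fin n) ℝ} (hB : IsMPInv A B) (hC : IsMPInv A C) :
    B = C := by
  obtain ⟨b1, b2, b3, b4⟩ := hB
  obtain ⟨c1, c2, c3, c4⟩ := hC
  have c1t : Aᵀ * (Cᵀ * Aᵀ) = Aᵀ := by
    have := congrArg Matrix.transpose c1
    simpa only [transpose_mul, Matrix.mul_assoc] using this
  have hAB : A * B = A * C := by
    calc A * B = Bᵀ * Aᵀ := by rw [← b3, transpose_mul]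
      _ = Bᵀ * (Aᵀ * (Cᵀ * Aᵀ)) := by rw [c1t]
      _ = (Bᵀ * Aᵀ) * (Cᵀ * Aᵀ) := by simp only [Matrix.mul_assoc]
      _ = (A * B) * (A * C) := by rw [← transpose_mul, ← transpose_mul, b3, c3]
      _ = (A * B * A) * C := by simp only [Matrix.mul_assoc]
      _ = A * C := by rw [b1]
  have hBA : B * A = C * A := by
    calc B * A = Aᵀ * Bᵀ := by rw [← b4, transpose_mul]
      _ = (Aᵀ * (Cᵀ * Aᵀ)) * Bᵀ := by rw [c1t]
      _ = (Aᵀ * Cᵀ) * (Aᵀ * Bᵀ) := by simp only [Matrix.mul_assoc]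
      _ = (C * A)ᵀ * (B * A)ᵀ := by rw [transpose_mul, transpose_mul]
      _ = (C * A) * (B * A) := by rw [b4, c4]
      _ = C * (A * B * A) := by simp only [Matrix.mul_assoc]
      _ = C * A := by rw [b1]
  calc B = B * A * B := b2.symm
    _ = C * A * B := by rw [hBA]
    _ = C * (A * B) := by rw [Matrix.mul_assoc]
    _ = C * (A * C) := by rw [hAB]
    _ = C * A * C := by rw [Matrix.mul_assoc]
    _ = C := c2

lemma mp_symm {A B : Matrix (Fin n) (Fin n) ℝ} (hA : Aᵀ = A) (h : IsMPInv A B) : Bᵀ = B := by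
  obtain ⟨b1, b2, b3, b4⟩ := h
  have ht : IsMPInv A Bᵀ := by
    refine ⟨?_, ?_, ?_, ?_⟩
    · have := congrArg Matrix.transpose b1
      simpa only [transpose_mul, hA, Matrix.mul_assoc] using this
    · have := congrArg Matrix.transpose b2
      simpa only [transpose_mul, hA, Matrix.mul_assoc] using this
    · rw [show A * Bᵀ = (B * A)ᵀ by rw [transpose_mul, hA], transpose_transpose, b4]
    · rw [show Bᵀ * A = (A * B)ᵀ by rw [transpose_mul, hA], transpose_transpose, b3]
  exact (mp_unique ⟨b1, b2, b3, b4⟩ ht).symm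

/-- `Ld *ᵥ 𝟙 = 0` when `L *ᵥ 𝟙 = 0`. -/
lemma mp_one {L Ld : Matrix (Fin n) (Fin n) ℝ} (hsym : Lᵀ = L) (hMP : IsMPInv L Ld)
    (hone : L *ᵥ (fun _ => 1) = 0) : Ld *ᵥ (fun _ => (1:ℝ)) = 0 := by
  have hds := mp_symm hsym hMP
  obtain ⟨b1, b2, b3, b4⟩ := hMP
  have hLLd : L * Ld = Ld * L := by
    rw [← b3, transpose_mul, hds, hsym]
  have key : Ld = Ld * Ld * L := by
    calc Ld = Ld * L * Ld := b2.symm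
      _ = Ld * (L * Ld) := by rw [Matrix.mul_assoc]
      _ = Ld * (Ld * L) := by rw [hLLd]
      _ = Ld * Ld * L := by rw [Matrix.mul_assoc]
  calc Ld *ᵥ (fun _ => (1:ℝ)) = (Ld * Ld * L) *ᵥ (fun _ => (1:ℝ)) := by rw [← key]
    _ = (Ld * Ld) *ᵥ (L *ᵥ (fun _ => (1:ℝ))) := by rw [← mulVec_mulVec]
    _ = 0 := by rw [hone, mulVec_zero]

/-- projection: for `v ⟂ 𝟙`, `(L * Ld) *ᵥ v = v`. -/
lemma mp_proj {L Ld : Matrix (Fin n) (Fin n) ℝ} (hsym : Lᵀ = L) (hMP : IsMPInv L Ld)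
    (hone : L *ᵥ (fun _ => 1) = 0)
    (hker : ∀ x, L.mulVec x = 0 → ∃ c : ℝ, x = fun _ => c)
    (v : Fin n → ℝ) (hv : ∑ j, v j = 0) : (L * Ld) *ᵥ v = v := by
  have hds := mp_symm hsym hMP
  obtain ⟨b1, b2, b3, b4⟩ := hMP
  have hLLd : L * Ld = Ld * L := by rw [← b3, transpose_mul, hds, hsym]
  have hLu : L *ᵥ (v - (L * Ld) *ᵥ v) = 0 := by
    rw [mulVec_sub, mulVec_mulVec]
    have : L * (L * Ld) = L := by
      rw [hLLd, ← Matrix.mul_assoc]; exact b1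
    rw [this, sub_self]
  obtain ⟨c, hc⟩ := hker _ hLu
  have hproj1 : (L * Ld) *ᵥ (fun _ => (1:ℝ)) = 0 := by
    rw [hLLd, ← mulVec_mulVec, hone, mulVec_zero]
  have hsum2 : ∑ j, ((L * Ld) *ᵥ v) j = 0 := by
    have : ∑ j, ((L * Ld) *ᵥ v) j = (fun _ => (1:ℝ)) ⬝ᵥ ((L * Ld) *ᵥ v) := by
      simp [dotProduct]
    rw [this, dot_shift]
    have : (L * Ld)ᵀ = L * Ld := b3
    rw [this, hproj1]
    simp
  have hcsum : (n : ℝ) * c = 0 := by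
    have h := congrArg (fun f => ∑ j, f j) hc
    simp only [Pi.sub_apply, Finset.sum_sub_distrib, Finset.sum_const, Finset.card_univ,
      Fintype.card_fin, nsmul_eq_mul, mul_one] at h
    rw [hv, hsum2] at h
    linarith
  funext j
  have hcj := congrFun hc j
  simp only [Pi.sub_apply] at hcj
  have hn : (0:ℝ) < n := by
    have : 0 < n := Nat.pos_of_ne_zero (by rintro rfl; exact absurd j.2 (by simp))
    exact_mod_cast this
  have hc0 : c = 0 := by
    rcases mul_eq_zero.mp hcsum with h | h
    · exact absurd h (ne_of_gt hn)
    · exact h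
  rw [hc0] at hcj
  linarith

/-- Key quadratic lower bound: `2⟨v,w⟩ - ⟨w,Lw⟩ ≤ ⟨v,Ld v⟩` when `(L*Ld)v = v`. -/
lemma quad_ineq {L Ld : Matrix (Fin n) (Fin n) ℝ} (hsym : Lᵀ = L) (hpsd : L.PosSemidef)
    (hMP : IsMPInv L Ld) (v w : Fin n → ℝ) (hproj : (L * Ld) *ᵥ v = v) :
    2 * (v ⬝ᵥ w) - w ⬝ᵥ (L *ᵥ w) ≤ v ⬝ᵥ (Ld *ᵥ v) := by
  have hds := mp_symm hsym hMP
  obtain ⟨b1, b2, b3, b4⟩ := hMP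
  have h0 : 0 ≤ (w - Ld *ᵥ v) ⬝ᵥ (L *ᵥ (w - Ld *ᵥ v)) := by
    have := hpsd.dotProduct_mulVec_nonneg (w - Ld *ᵥ v)
    simpa using this
  have e1 : w ⬝ᵥ (L *ᵥ (Ld *ᵥ v)) = w ⬝ᵥ v := by rw [mulVec_mulVec, hproj]
  have e2 : (Ld *ᵥ v) ⬝ᵥ (L *ᵥ w) = v ⬝ᵥ w := by
    rw [dot_shift, mulVec_mulVec, hsym, hproj]
  have e3 : (Ld *ᵥ v) ⬝ᵥ (L *ᵥ (Ld *ᵥ v)) = v ⬝ᵥ (Ld *ᵥ v) := by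
    rw [dot_shift, mulVec_mulVec, hsym, hproj]
  have hcomm : w ⬝ᵥ v = v ⬝ᵥ w := dotProduct_comm w v
  rw [mulVec_sub, dotProduct_sub, sub_dotProduct, sub_dotProduct] at h0
  rw [e1, e2, e3, hcomm] at h0
  linarith



lemma dot_shift' (A : Matrix (Fin n) (Fin n) ℝ) (x z : Fin n → ℝ) :
    (A *ᵥ x) ⬝ᵥ z = x ⬝ᵥ (Aᵀ *ᵥ z) := by
  rw [dot_shift, transpose_transpose]

lemma diag_dot {M : Matrix (Fin n) (Fin n) ℝ} (hMs : Mᵀ = M)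
    (hM1 : M *ᵥ (fun _ => (1:ℝ)) = 0) (i : Fin n) :
    (fun j => (if j = i then (1:ℝ) else 0) - 1/n) ⬝ᵥ
      (M *ᵥ (fun j => (if j = i then (1:ℝ) else 0) - 1/n)) = M i i := by
  have hv : (fun j => (if j = i then (1:ℝ) else 0) - 1/n)
      = (fun j => if j = i then (1:ℝ) else 0) - (1/(n:ℝ)) • (fun _ => (1:ℝ)) := by
    funext j; simp
  rw [hv, mulVec_sub, mulVec_smul, hM1, smul_zero, sub_zero, sub_dotProduct, smul_dotProduct]
  have h1 : (fun _ => (1:ℝ)) ⬝ᵥ (M *ᵥ (fun j => if j = i then (1:ℝ) else 0)) = 0 := by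
    rw [dot_shift, hMs, hM1]
    simp
  rw [h1, smul_zero, sub_zero]
  simp [dotProduct, mulVec, ite_mul, mul_ite, mul_zero, zero_mul, mul_one, one_mul,
    Finset.sum_ite_eq, Finset.sum_ite_eq']

end MPAux

open MPAux in
/-- For any two Laplacians `L`, `L̂` of connected graphs,
`tr((L + L̂)†) ≤ (1/4) tr(L†) + (1/4) tr(L̂†)`, equivalently
`tr(L̂†) + tr(L†) - 4 tr((L+L̂)†) ≥ 0`. -/
theorem trace_pinv_sum_le {n : ℕ}
    (L Lhat : Matrix (Fin n) (Fin n) ℝ)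
    (hLsym : L.IsSymm) (hLpsd : L.PosSemidef)
    (hLone : L.mulVec (fun _ => 1) = 0)
    (hLker : ∀ x, L.mulVec x = 0 → ∃ c : ℝ, x = fun _ => c)
    (hhsym : Lhat.IsSymm) (hhpsd : Lhat.PosSemidef)
    (hhone : Lhat.mulVec (fun _ => 1) = 0)
    (hhker : ∀ x, Lhat.mulVec x = 0 → ∃ c : ℝ, x = fun _ => c)
    (Ld Lhatd Sd : Matrix (Fin n) (Fin n) ℝ)
    (hLd : IsMPInv L Ld) (hLhatd : IsMPInv Lhat Lhatd) (hSd : IsMPInv (L + Lhat) Sd) :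
    Sd.trace ≤ (1/4) * Ld.trace + (1/4) * Lhatd.trace ∧
    0 ≤ Lhatd.trace + Ld.trace - 4 * Sd.trace := by
  have hLsym' : Lᵀ = L := hLsym
  have hhsym' : Lhatᵀ = Lhat := hhsym
  have hSsym : (L + Lhat)ᵀ = L + Lhat := by rw [transpose_add, hLsym', hhsym']
  have hSone : (L + Lhat) *ᵥ (fun _ => (1:ℝ)) = 0 := by
    rw [add_mulVec, hLone, hhone, add_zero]
  have hSpsd : (L + Lhat).PosSemidef := hLpsd.add hhpsd
  have hSker : ∀ x, (L + Lhat).mulVec x = 0 → ∃ c : ℝ, x = fun _ => c := by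
    intro x hx
    apply hLker
    rw [← (hLpsd.dotProduct_mulVec_zero_iff x)]
    have h0 : star x ⬝ᵥ (L + Lhat) *ᵥ x = 0 := by rw [hx]; simp
    rw [add_mulVec, dotProduct_add] at h0
    have h1 := hLpsd.dotProduct_mulVec_nonneg x
    have h2 := hhpsd.dotProduct_mulVec_nonneg x
    linarith
  have hLdsym := mp_symm hLsym' hLd
  have hhdsym := mp_symm hhsym' hLhatd
  have hSdsym := mp_symm hSsym hSd
  have hLd1 := mp_one hLsym' hLd hLone
  have hhd1 := mp_one hhsym' hLhatd hhone
  have hSd1 := mp_one hSsym hSd hSone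
  -- per-index inequality
  have key : ∀ i : Fin n, Sd i i ≤ 1/4 * Ld i i + 1/4 * Lhatd i i := by
    intro i
    set v : Fin n → ℝ := fun j => (if j = i then (1:ℝ) else 0) - 1/n with hvdef
    have hvsum : ∑ j, v j = 0 := by
      have hn : (0:ℝ) < n := by
        have : 0 < n := Nat.pos_of_ne_zero (by rintro rfl; exact absurd i.2 (by simp))
        exact_mod_cast this
      simp only [hvdef, Finset.sum_sub_distrib, Finset.sum_ite_eq', Finset.mem_univ, if_true,
        Finset.sum_const, Finset.card_univ, Fintype.card_fin, nsmul_eq_mul]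
      field_simp
      norm_num
    have hprojL := mp_proj hLsym' hLd hLone hLker v hvsum
    have hprojh := mp_proj hhsym' hLhatd hhone hhker v hvsum
    set y : Fin n → ℝ := Sd *ᵥ v with hydef
    -- v ⬝ᵥ Sd v = y ⬝ᵥ S y
    have hySy : y ⬝ᵥ ((L + Lhat) *ᵥ y) = v ⬝ᵥ (Sd *ᵥ v) := by
      rw [hydef, mulVec_mulVec, dot_shift', hSdsym, mulVec_mulVec, ← Matrix.mul_assoc,
        hSd.2.1]
    have hySy' : y ⬝ᵥ (L *ᵥ y) + y ⬝ᵥ (Lhat *ᵥ y) = v ⬝ᵥ (Sd *ᵥ v) := by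
      rw [← hySy, add_mulVec, dotProduct_add]
    -- quadratic lower bounds with w = 2 • y
    have hqL := quad_ineq hLsym' hLpsd hLd v ((2:ℝ) • y) hprojL
    have hqh := quad_ineq hhsym' hhpsd hLhatd v ((2:ℝ) • y) hprojh
    rw [dotProduct_smul, mulVec_smul, dotProduct_smul, smul_dotProduct] at hqL hqh
    simp only [smul_eq_mul] at hqL hqh
    -- diagonal identifications
    have hdS := diag_dot hSdsym hSd1 i
    have hdL := diag_dot hLdsym hLd1 i
    have hdh := diag_dot hhdsym hhd1 i
    rw [← hvdef] at hdS hdL hdh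
    have hvy : v ⬝ᵥ y = Sd i i := by rw [hydef, ← hdS]
    rw [hvy] at hqL hqh
    rw [hdS] at hySy'
    rw [hdL] at hqL
    rw [hdh] at hqh
    linarith
  -- sum up
  have htr : ∀ M : Matrix (Fin n) (Fin n) ℝ, M.trace = ∑ i, M i i := fun M => rfl
  rw [htr Sd, htr Ld, htr Lhatd] at *
  constructor
  · calc ∑ i, Sd i i ≤ ∑ i, (1/4 * Ld i i + 1/4 * Lhatd i i) :=
        Finset.sum_le_sum (fun i _ => key i)
      _ = 1/4 * ∑ i, Ld i i + 1/4 * ∑ i, Lhatd i i := by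
        rw [Finset.sum_add_distrib, Finset.mul_sum, Finset.mul_sum]
  · have h := Finset.sum_le_sum (fun i (_ : i ∈ Finset.univ) => key i)
    rw [Finset.sum_add_distrib, ← Finset.mul_sum, ← Finset.mul_sum] at h
    linarith
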